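/- Let K be a d-dimensional simplicial complex. Suppose K collapses to a (d−1)-dimensional simplicial complex L and K also collapses to some d-dimensional simplicial complex M. Then M collapses to a simplicial complex of dimension at most d−1. -/

import Mathlib

/-- An (abstract) simplicial complex: a finite family of finite sets closed
under taking subsets. -/
def IsComplex {V : Type*} (K : Finset (Finset V)) : Prop :=
  ∀ α ∈ K, ∀ β ⊆ α, β ∈ K

/-- A face `τ` of `K` is maximal if no face of `K` strictly contains it. -/
def IsMaximalFace {V : Type*} (K : Finset (Finset V)) (τ : Finset V) : Prop :=
  τ ∈ K ∧ ∀ η ∈ K, τ ⊆ η → η = τ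

/-- `σ` is a free face of `K` with unique maximal coface `τ`:
`σ` is a nonempty non-maximal face contained in exactly one maximal face `τ`. -/
def IsFreePair {V : Type*} (K : Finset (Finset V)) (σ τ : Finset V) : Prop :=
  σ ∈ K ∧ σ.Nonempty ∧ ¬ IsMaximalFace K σ ∧
    IsMaximalFace K τ ∧ σ ⊆ τ ∧
    ∀ τ', IsMaximalFace K τ' → σ ⊆ τ' → τ' = τ

/-- The elementary collapse of `K` at the face `σ`:
remove `σ` and all faces above `σ`. -/
def collapseAt {V : Type*} [DecidableEq V] (K : Finset (Finset V)) (σ : Finset V) :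
    Finset (Finset V) :=
  K.filter fun ϑ => ¬ σ ⊆ ϑ

/-- `K'` is an elementary collapse of `K`. -/
def ElemCollapse {V : Type*} [DecidableEq V] (K K' : Finset (Finset V)) : Prop :=
  ∃ σ τ : Finset V, IsFreePair K σ τ ∧ K' = collapseAt K σ

/-- `K` collapses to `L`: a (possibly empty) sequence of elementary collapses
leads from `K` to `L`. -/
def CollapsesTo {V : Type*} [DecidableEq V] (K L : Finset (Finset V)) : Prop :=
  Relation.ReflTransGen ElemCollapse K L

/-- `K` has dimension exactly `d`: every face has at most `d + 1` vertices and
some face has exactly `d + 1` vertices (the dimension of a face `α` is `|α| - 1`). -/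
def DimEq {V : Type*} (K : Finset (Finset V)) (d : ℕ) : Prop :=
  (∀ α ∈ K, α.card ≤ d + 1) ∧ ∃ α ∈ K, α.card = d + 1

/-- The constrain complex of the pair `(M, L)`:
faces of `L` contained in some face of `M \ L`. -/
def constrainComplex {V : Type*} [DecidableEq V] (M L : Finset (Finset V)) :
    Finset (Finset V) :=
  L.filter fun ϑ => ∃ η ∈ M \ L, ϑ ⊆ η

section Aux

variable {V : Type*} [DecidableEq V]

lemma mem_collapseAt {K : Finset (Finset V)} {σ η : Finset V} :
    η ∈ collapseAt K σ ↔ η ∈ K ∧ ¬ σ ⊆ η := Finset.mem_filter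

lemma exists_maximal_coface {K : Finset (Finset V)} {η : Finset V} (h : η ∈ K) :
    ∃ m, IsMaximalFace K m ∧ η ⊆ m := by
  classical
  obtain ⟨m, hm, hmax⟩ := (K.filter fun t => η ⊆ t).exists_maximal
    ⟨η, Finset.mem_filter.mpr ⟨h, Finset.Subset.refl _⟩⟩
  rw [Finset.mem_filter] at hm
  refine ⟨m, ⟨hm.1, ?_⟩, hm.2⟩
  intro γ hγ hsub
  by_contra hne
  exact hne (Finset.Subset.antisymm
    (hmax (Finset.mem_filter.mpr ⟨hγ, hm.2.trans hsub⟩) hsub) hsub)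

lemma coface_subset_of_free {K : Finset (Finset V)} {σ τ : Finset V}
    (h : IsFreePair K σ τ) : ∀ η ∈ K, σ ⊆ η → η ⊆ τ := by
  intro η hη hσ
  obtain ⟨m, hmax, hsub⟩ := exists_maximal_coface hη
  have := h.2.2.2.2.2 m hmax (hσ.trans hsub)
  exact this ▸ hsub

/-- a pair collapse step: an elementary collapse where the maximal coface has
exactly one more vertex than the free face. -/
def PairStep (X X' : Finset (Finset V)) : Prop :=
  ∃ σ : Finset V, ∃ x : V, x ∉ σ ∧ IsFreePair X σ (insert x σ) ∧ X' = collapseAt X σ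

def PairCollapses (X X' : Finset (Finset V)) : Prop :=
  Relation.ReflTransGen PairStep X X'

lemma pairStep_elem {X X' : Finset (Finset V)} (h : PairStep X X') : ElemCollapse X X' := by
  obtain ⟨σ, x, _, hfp, rfl⟩ := h
  exact ⟨σ, insert x σ, hfp, rfl⟩

/-- collapsing a full interval [σ, τ] decomposes into pair collapses. -/
lemma intervalCollapse : ∀ n : ℕ, ∀ (X : Finset (Finset V)) (σ τ : Finset V),
    (τ \ σ).card = n → σ.Nonempty → σ ⊆ τ → σ ≠ τ → τ ∈ X →
    (∀ η ∈ X, σ ⊆ η → η ⊆ τ) → (∀ ϑ : Finset V, σ ⊆ ϑ → ϑ ⊆ τ → ϑ ∈ X) →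
    PairCollapses X (collapseAt X σ) := by
  intro n
  induction n using Nat.strong_induction_on with
  | _ n ih =>
    intro X σ τ hn hne hστ hneq hτX hcof hint
    have hσX : σ ∈ X := hint σ (Finset.Subset.refl _) hστ
    have hpos : 0 < n := by
      rcases Finset.exists_of_ssubset (Finset.ssubset_iff_subset_ne.mpr ⟨hστ, hneq⟩)
        with ⟨x, hxτ, hxσ⟩
      have : x ∈ τ \ σ := Finset.mem_sdiff.mpr ⟨hxτ, hxσ⟩
      have := Finset.card_pos.mpr ⟨x, this⟩
      omega
    rcases Nat.lt_or_ge 1 n with hn2 | hn1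
    · -- n ≥ 2 : split off the upper half-interval
      obtain ⟨x, hx⟩ : (τ \ σ).Nonempty := Finset.card_pos.mp (by omega)
      have hxτ : x ∈ τ := (Finset.mem_sdiff.mp hx).1
      have hxσ : x ∉ σ := (Finset.mem_sdiff.mp hx).2
      set σ' := insert x σ with hσ'
      have hσ'τ : σ' ⊆ σ' ∪ τ := Finset.subset_union_left
      have hσ'sub : σ' ⊆ τ := Finset.insert_subset hxτ hστ
      have hcard1 : (τ \ σ').card = n - 1 := by
        rw [hσ', Finset.sdiff_insert, Finset.card_erase_of_mem hx, hn]
      have hneq' : σ' ≠ τ := by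
        intro e
        rw [e] at hcard1
        simp at hcard1
        omega
      have step1 : PairCollapses X (collapseAt X σ') := by
        refine ih (n-1) (by omega) X σ' τ hcard1 ⟨x, Finset.mem_insert_self _ _⟩
          hσ'sub hneq' hτX ?_ ?_
        · intro η hη hs
          exact hcof η hη ((Finset.subset_insert x σ).trans hs)
        · intro ϑ h1 h2
          exact hint ϑ ((Finset.subset_insert x σ).trans h1) h2
      set X₁ := collapseAt X σ' with hX₁
      set τ' := τ.erase x with hτ'
      have hττ' : σ ⊆ τ' := Finset.subset_erase.mpr ⟨hστ, hxσ⟩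
      have hcard2 : (τ' \ σ).card = n - 1 := by
        rw [hτ', Finset.erase_sdiff_comm, Finset.card_erase_of_mem hx, hn]
      have hneq2 : σ ≠ τ' := by
        intro e
        rw [← e] at hcard2
        simp at hcard2
        omega
      have step2 : PairCollapses X₁ (collapseAt X₁ σ) := by
        refine ih (n-1) (by omega) X₁ σ τ' hcard2 hne hττ' hneq2 ?_ ?_ ?_
        · refine mem_collapseAt.mpr ⟨hint τ' hττ' (Finset.erase_subset _ _), ?_⟩
          intro hc
          exact (Finset.notMem_erase x τ) (hc (Finset.mem_insert_self _ _))
        · intro η hη hs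
          rcases mem_collapseAt.mp hη with ⟨hηX, hηn⟩
          have hsubτ : η ⊆ τ := hcof η hηX hs
          have hxη : x ∉ η := by
            intro hxη
            exact hηn (Finset.insert_subset hxη hs)
          exact Finset.subset_erase.mpr ⟨hsubτ, hxη⟩
        · intro ϑ h1 h2
          refine mem_collapseAt.mpr ⟨hint ϑ h1 (h2.trans (Finset.erase_subset _ _)), ?_⟩
          intro hc
          exact (Finset.notMem_erase x τ) (h2 (hc (Finset.mem_insert_self _ _)))
      have heq : collapseAt X₁ σ = collapseAt X σ := by
        ext η
        simp only [hX₁, mem_collapseAt]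
        constructor
        · rintro ⟨⟨h1, _⟩, h3⟩; exact ⟨h1, h3⟩
        · rintro ⟨h1, h2⟩
          exact ⟨⟨h1, fun hc => h2 ((Finset.subset_insert x σ).trans hc)⟩, h2⟩
      exact step1.trans (heq ▸ step2)
    · -- n = 1 : a single pair step
      have hn1' : (τ \ σ).card = 1 := by omega
      obtain ⟨x, hx⟩ := Finset.card_eq_one.mp hn1'
      have hxτ : x ∈ τ := by
        have : x ∈ τ \ σ := hx ▸ Finset.mem_singleton_self x
        exact (Finset.mem_sdiff.mp this).1
      have hxσ : x ∉ σ := by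
        have : x ∈ τ \ σ := hx ▸ Finset.mem_singleton_self x
        exact (Finset.mem_sdiff.mp this).2
      have hτeq : τ = insert x σ := by
        apply Finset.Subset.antisymm
        · intro y hy
          by_cases hyσ : y ∈ σ
          · exact Finset.mem_insert_of_mem hyσ
          · have : y ∈ τ \ σ := Finset.mem_sdiff.mpr ⟨hy, hyσ⟩
            rw [hx, Finset.mem_singleton] at this
            rw [this]; exact Finset.mem_insert_self _ _
        · exact Finset.insert_subset hxτ hστ
      have hmaxτ : IsMaximalFace X τ := by
        refine ⟨hτX, fun η hη hsub => Finset.Subset.antisymm (hcof η hη (hστ.trans hsub)) hsub⟩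
      have hfp : IsFreePair X σ (insert x σ) := by
        rw [← hτeq]
        refine ⟨hσX, hne, ?_, hmaxτ, hστ, ?_⟩
        · intro ⟨_, hm⟩
          exact hneq (hm τ hτX hστ).symm
        · intro τ' hτ' hsub
          have h1 : τ' ⊆ τ := hcof τ' hτ'.1 hsub
          exact (hτ'.2 τ hτX h1).symm
      exact Relation.ReflTransGen.single ⟨σ, x, hxσ, hfp, rfl⟩

lemma isComplex_collapseAt {X : Finset (Finset V)} (hX : IsComplex X) (σ : Finset V) :
    IsComplex (collapseAt X σ) := by
  intro α hα β hβ
  rcases mem_collapseAt.mp hα with ⟨h1, h2⟩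
  exact mem_collapseAt.mpr ⟨hX α h1 β hβ, fun hc => h2 (hc.trans hβ)⟩

lemma isComplex_elem {X X' : Finset (Finset V)} (hX : IsComplex X)
    (h : ElemCollapse X X') : IsComplex X' := by
  obtain ⟨σ, τ, _, rfl⟩ := h
  exact isComplex_collapseAt hX σ

lemma collapsesTo_subset_isComplex {K M : Finset (Finset V)} (hK : IsComplex K)
    (h : CollapsesTo K M) : M ⊆ K ∧ IsComplex M := by
  induction h with
  | refl => exact ⟨Finset.Subset.refl _, hK⟩
  | tail h₁ h₂ ih =>
    refine ⟨?_, isComplex_elem ih.2 h₂⟩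
    obtain ⟨σ, τ, _, rfl⟩ := h₂
    exact (Finset.filter_subset _ _).trans ih.1

lemma elemCollapse_pair {X X' : Finset (Finset V)} (hX : IsComplex X)
    (h : ElemCollapse X X') : PairCollapses X X' := by
  obtain ⟨σ, τ, hfp, rfl⟩ := h
  have hneq : σ ≠ τ := by
    intro e
    exact hfp.2.2.1 (e ▸ hfp.2.2.2.1)
  exact intervalCollapse (τ \ σ).card X σ τ rfl hfp.2.1 hfp.2.2.2.2.1 hneq
    hfp.2.2.2.1.1 (coface_subset_of_free hfp)
    (fun ϑ _ h2 => hX τ hfp.2.2.2.1.1 ϑ h2)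

lemma collapsesTo_pair {K L : Finset (Finset V)} (h : CollapsesTo K L)
    (hK : IsComplex K) : PairCollapses K L := by
  induction h using Relation.ReflTransGen.head_induction_on with
  | refl => exact Relation.ReflTransGen.refl
  | head h' hrest ih =>
    exact (elemCollapse_pair hK h').trans (ih (isComplex_elem hK h'))

/-- The key lemma: if `X` pair-collapses to a low-dimensional `Y`, then any
`Z` whose top faces are "supported" in `X` (with only low-dimensional junk
outside `X`) collapses to something low-dimensional. -/
lemma crux (d : ℕ) {X Y : Finset (Finset V)} (h : PairCollapses X Y) :
    ∀ Z : Finset (Finset V),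
    (∀ α ∈ X, α.card ≤ d + 1) → (∀ α ∈ Y, α.card ≤ d) →
    (∀ η ∈ Z, η ∉ X → η.card ≤ d) →
    (∀ γ ∈ Z, γ.card = d + 1 → ∀ β ∈ X, β ⊆ γ → β ∈ Z) →
    ∃ N : Finset (Finset V), CollapsesTo Z N ∧ ∀ α ∈ N, α.card ≤ d := by
  induction h using Relation.ReflTransGen.head_induction_on with
  | refl =>
    intro Z _ h2 h3 _
    refine ⟨Z, Relation.ReflTransGen.refl, fun α hα => ?_⟩
    by_cases hY : α ∈ Y
    · exact h2 α hY
    · exact h3 α hα hY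
  | @head a c step hrest ih =>
    intro Z h1 h2 h3 h4
    obtain ⟨σ₁, x, hx, hfp, rfl⟩ := step
    set τ₁ := insert x σ₁ with hτ₁
    have hσ₁a : σ₁ ∈ a := hfp.1
    have hτ₁a : τ₁ ∈ a := hfp.2.2.2.1.1
    have hcard : τ₁.card = σ₁.card + 1 := Finset.card_insert_of_notMem hx
    have hσ₁card : σ₁.card ≤ d := by
      have := h1 τ₁ hτ₁a; omega
    have hcof : ∀ η ∈ a, σ₁ ⊆ η → η = σ₁ ∨ η = τ₁ := by
      intro η hη hs
      have hsubτ : η ⊆ τ₁ := coface_subset_of_free hfp η hη hs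
      by_cases hxη : x ∈ η
      · exact Or.inr (Finset.Subset.antisymm hsubτ
          (Finset.insert_subset hxη hs))
      · refine Or.inl (Finset.Subset.antisymm ?_ hs)
        intro y hy
        rcases Finset.mem_insert.mp (hsubτ hy) with h | h
        · exact absurd (h ▸ hy) hxη
        · exact h
    have hmemc : ∀ η : Finset V, η ∈ collapseAt a σ₁ ↔ η ∈ a ∧ ¬ σ₁ ⊆ η :=
      fun η => mem_collapseAt
    have h1c : ∀ α ∈ collapseAt a σ₁, α.card ≤ d + 1 :=
      fun α hα => h1 α (hmemc α |>.mp hα).1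
    by_cases hP : σ₁ ∈ Z ∧ τ₁ ∈ Z ∧ ∀ η ∈ Z, σ₁ ⊆ η → η = σ₁ ∨ η = τ₁
    · -- perform the collapse on Z as well
      obtain ⟨hσZ, hτZ, hcofZ⟩ := hP
      have hστ₁ : σ₁ ⊆ τ₁ := Finset.subset_insert x σ₁
      have hneq : σ₁ ≠ τ₁ := by
        intro e
        have : τ₁.card = σ₁.card := by rw [e]
        omega
      have hfpZ : IsFreePair Z σ₁ τ₁ := by
        refine ⟨hσZ, hfp.2.1, ?_, ⟨hτZ, ?_⟩, hστ₁, ?_⟩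
        · intro ⟨_, hm⟩
          exact hneq (hm τ₁ hτZ hστ₁).symm
        · intro η hη hsub
          rcases hcofZ η hη (hστ₁.trans hsub) with h | h
          · exact absurd (h ▸ hsub) (fun hc => hneq (Finset.Subset.antisymm hστ₁ hc))
          · exact h
        · intro τ' hτ' hsub
          rcases hcofZ τ' hτ'.1 hsub with h | h
          · exfalso
            exact hneq ((hτ'.2 τ₁ hτZ (h ▸ hστ₁)) ▸ h ▸ rfl)
          · exact h
      have hstep : ElemCollapse Z (collapseAt Z σ₁) := ⟨σ₁, τ₁, hfpZ, rfl⟩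
      have hmemZ₁ : ∀ η : Finset V, η ∈ collapseAt Z σ₁ ↔ η ∈ Z ∧ ¬ σ₁ ⊆ η :=
        fun η => mem_collapseAt
      obtain ⟨N, hN1, hN2⟩ := ih (collapseAt Z σ₁) h1c h2
        (by
          intro η hη hηc
          rcases (hmemZ₁ η).mp hη with ⟨hηZ, hns⟩
          by_cases hηa : η ∈ a
          · exact absurd ((hmemc η).mpr ⟨hηa, hns⟩) hηc
          · exact h3 η hηZ hηa)
        (by
          intro γ hγ hγcard β hβ hβγ
          rcases (hmemZ₁ γ).mp hγ with ⟨hγZ, _⟩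
          rcases (hmemc β).mp hβ with ⟨hβa, hβns⟩
          exact (hmemZ₁ β).mpr ⟨h4 γ hγZ hγcard β hβa hβγ, hβns⟩)
      exact ⟨N, Relation.ReflTransGen.head hstep hN1, hN2⟩
    · -- skip this step: Z is unchanged
      have hjunk : ∀ η ∈ Z, η ∉ collapseAt a σ₁ → η.card ≤ d := by
        intro η hηZ hηc
        by_cases hηa : η ∈ a
        · have hs : σ₁ ⊆ η := by
            by_contra hns
            exact hηc ((hmemc η).mpr ⟨hηa, hns⟩)
          rcases hcof η hηa hs with h | h
          · rw [h]; exact hσ₁card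
          · -- η = τ₁ ∈ Z; show its card is ≤ d, else hP would hold
            by_contra hbig
            rw [h] at hbig
            have hτcard : τ₁.card = d + 1 := by
              have := h1 τ₁ hτ₁a
              omega
            have hτZ : τ₁ ∈ Z := h ▸ hηZ
            have hσZ : σ₁ ∈ Z := h4 τ₁ hτZ hτcard σ₁ hσ₁a (Finset.subset_insert x σ₁)
            refine hP ⟨hσZ, hτZ, ?_⟩
            intro η' hη' hs'
            by_cases hη'a : η' ∈ a
            · exact hcof η' hη'a hs'
            · exfalso
              have hsmall : η'.card ≤ d := h3 η' hη' hη'a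
              have hne' : η' ≠ σ₁ := fun e => hη'a (e ▸ hσ₁a)
              have hss : σ₁ ⊂ η' := Finset.ssubset_iff_subset_ne.mpr ⟨hs', fun e => hne' e.symm⟩
              have hlt : σ₁.card < η'.card := Finset.card_lt_card hss
              have hσd : σ₁.card = d := by
                rw [hcard] at hτcard; omega
              omega
        · exact h3 η hηZ hηa
      obtain ⟨N, hN1, hN2⟩ := ih Z h1c h2 hjunk
        (fun γ hγ hγcard β hβ hβγ => h4 γ hγ hγcard β ((hmemc β).mp hβ).1 hβγ)
      exact ⟨N, hN1, hN2⟩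

end Aux

/-- If a `d`-dimensional complex `K` collapses both to a `(d-1)`-dimensional
complex `L` and to some `d`-dimensional complex `M`, then `M` collapses to a
complex of dimension at most `d - 1`. -/
theorem dCollapsesCodimOne {V : Type*} [DecidableEq V] (d : ℕ) (hd : 1 ≤ d)
    (K L M : Finset (Finset V))
    (hK : IsComplex K) (hKd : DimEq K d)
    (hKL : CollapsesTo K L) (hLd : DimEq L (d - 1))
    (hKM : CollapsesTo K M) (hMd : DimEq M d) :
    ∃ N : Finset (Finset V), CollapsesTo M N ∧ ∀ α ∈ N, α.card ≤ d := by
  obtain ⟨hMK, hMc⟩ := collapsesTo_subset_isComplex hK hKM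
  have hpair : PairCollapses K L := collapsesTo_pair hKL hK
  refine crux d hpair M hKd.1 (fun α hα => ?_) (fun η hη hn => absurd (hMK hη) hn)
    (fun γ hγ _ β _ hβ => hMc γ hγ β hβ)
  have := hLd.1 α hα
  omega
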